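/- Removing a maximal edge (with respect to some fixed linear order) of every cycle of length at most 2r in a graph G on n vertices yields a graph G̃ that is O(n^{1/r})-degenerate and has the same connected components as G; in particular, any spanning forest of G̃ is a spanning forest of G. -/

import Mathlib

open SimpleGraph

/-- The set of edges of `G` that are the `w`-maximum edge of some cycle of `G` of
length at most `2r` (the edge order is given by an injective weight `w`). -/
def MaxShortCycleEdges {V : Type} (G : SimpleGraph V) (w : Sym2 V → ℕ) (r : ℕ) :
    Set (Sym2 V) :=
  {e | ∃ (x : V) (c : G.Walk x x), c.IsCycle ∧ c.length ≤ 2 * r ∧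
    e ∈ c.edges ∧ ∀ e' ∈ c.edges, e' ≠ e → w e' < w e}

/-- `H` is `k`-degenerate: every nonempty finite set of vertices contains a vertex
with at most `k` neighbors inside the set. -/
def Degenerate {V : Type} (H : SimpleGraph V) (k : ℕ) : Prop :=
  ∀ s : Finset V, s.Nonempty → ∃ v ∈ s, {u | u ∈ s ∧ H.Adj v u}.ncard ≤ k

/-- `F` is a spanning forest of `H`: an acyclic spanning subgraph with the same
connected components. -/
def IsSpanningForest {V : Type} (H F : SimpleGraph V) : Prop :=
  F ≤ H ∧ (∀ (x : V) (c : F.Walk x x), ¬ c.IsCycle) ∧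
    ∀ u v : V, F.Reachable u v ↔ H.Reachable u v

section Helpers

open SimpleGraph Walk

variable {V : Type} {H : SimpleGraph V}

lemma walk_length_pos_of_ne {u v : V} (p : H.Walk u v) (h : u ≠ v) : 0 < p.length := by
  cases p with
  | nil => exact absurd rfl h
  | cons h p => simp [Walk.length_cons]

lemma path_edge_start {a c v : V} (q : H.Walk a v) (hq : q.IsPath) (h : s(a, c) ∈ q.edges) :
    ∃ (had : H.Adj a c) (q' : H.Walk c v), q = Walk.cons had q' := by
  cases q with
  | nil => simp at h
  | cons h1 q' =>
    rw [Walk.edges_cons, List.mem_cons] at h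
    rcases h with h | h
    · rw [Sym2.eq_iff] at h
      rcases h with ⟨-, rfl⟩ | ⟨rfl, rfl⟩
      · exact ⟨h1, q', rfl⟩
      · exact absurd h1 H.irrefl
    · exact absurd (Walk.fst_mem_support_of_mem_edges q' h)
        ((Walk.cons_isPath_iff _ _).mp hq).2

/-- Two distinct paths with the same endpoints yield a cycle of length at most the sum
of their lengths. -/
lemma cycle_of_two_paths :
    ∀ (L : ℕ) {a b : V} (p q : H.Walk a b), p.IsPath → q.IsPath → p ≠ q →
      p.length + q.length ≤ L →
      ∃ (x : V) (c : H.Walk x x), c.IsCycle ∧ c.length ≤ p.length + q.length := by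
  intro L
  induction L with
  | zero =>
    intro a b p q hp hq hne hL
    have hp0 : p.length = 0 := by omega
    have hq0 : q.length = 0 := by omega
    cases p with
    | nil =>
      cases q with
      | nil => exact absurd rfl hne
      | cons h q' => simp [Walk.length_cons] at hq0
    | cons h p' => simp [Walk.length_cons] at hp0
  | succ L ih =>
    intro a b p q hp hq hne hL
    classical
    by_cases hab : a = b
    · subst hab
      rw [Walk.isPath_iff_eq_nil] at hp hq
      exact absurd (hp.trans hq.symm) hne
    by_cases hcom : ∃ z, z ∈ p.support ∧ z ∈ q.support ∧ z ≠ a ∧ z ≠ b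
    · obtain ⟨z, hzp, hzq, hza, hzb⟩ := hcom
      have hps := p.take_spec hzp
      have hqs := q.take_spec hzq
      have hplen : (p.takeUntil z hzp).length + (p.dropUntil z hzp).length = p.length := by
        have := congrArg Walk.length hps
        rwa [Walk.length_append] at this
      have hqlen : (q.takeUntil z hzq).length + (q.dropUntil z hzq).length = q.length := by
        have := congrArg Walk.length hqs
        rwa [Walk.length_append] at this
      have hp1pos : 0 < (p.takeUntil z hzp).length :=
        walk_length_pos_of_ne _ (Ne.symm hza)
      have hq1pos : 0 < (q.takeUntil z hzq).length :=
        walk_length_pos_of_ne _ (Ne.symm hza)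
      have hp2pos : 0 < (p.dropUntil z hzp).length :=
        walk_length_pos_of_ne _ hzb
      have hq2pos : 0 < (q.dropUntil z hzq).length :=
        walk_length_pos_of_ne _ hzb
      by_cases h1 : p.takeUntil z hzp = q.takeUntil z hzq
      · have h2 : p.dropUntil z hzp ≠ q.dropUntil z hzq := by
          intro h2
          apply hne
          rw [← hps, ← hqs, h1, h2]
        obtain ⟨x, c, hc, hclen⟩ := ih (p.dropUntil z hzp) (q.dropUntil z hzq)
          (hp.dropUntil hzp) (hq.dropUntil hzq) h2 (by omega)
        exact ⟨x, c, hc, by omega⟩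
      · obtain ⟨x, c, hc, hclen⟩ := ih (p.takeUntil z hzp) (q.takeUntil z hzq)
          (hp.takeUntil hzp) (hq.takeUntil hzq) h1 (by omega)
        exact ⟨x, c, hc, by omega⟩
    · push_neg at hcom
      -- no common interior vertex
      cases p with
      | nil => exact absurd rfl hab
      | cons h p' =>
        rename_i x
        obtain ⟨hp', hap'⟩ := (Walk.cons_isPath_iff _ _).mp hp
        have hqrev : q.reverse.IsPath := hq.reverse
        have happ : (p'.append q.reverse).IsPath := by
          rw [Walk.isPath_def, Walk.support_append, List.nodup_append]
          refine ⟨(Walk.isPath_def _).mp hp', ((Walk.isPath_def _).mp hqrev).tail, ?_⟩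
          intro y hy1 y' hy2 hyy'
          subst hyy'
          have hyq : y ∈ q.support := by
            have := List.mem_of_mem_tail hy2
            rwa [Walk.support_reverse, List.mem_reverse] at this
          have hyp : y ∈ (Walk.cons h p').support := by
            rw [Walk.support_cons]
            exact List.mem_cons_of_mem _ hy1
          have hya : y ≠ a := fun hya => hap' (hya ▸ hy1)
          have hyb : y = b := hcom y hyp hyq hya
          subst hyb
          have hnod : q.reverse.support.Nodup := (Walk.isPath_def _).mp hqrev
          rw [Walk.support_eq_cons] at hnod
          exact (List.nodup_cons.mp hnod).1 hy2
        have hedge : s(a, x) ∉ (p'.append q.reverse).edges := by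
          rw [Walk.edges_append]
          intro hmem
          rcases List.mem_append.mp hmem with hmem | hmem
          · exact hap' (Walk.fst_mem_support_of_mem_edges p' hmem)
          · rw [Walk.edges_reverse, List.mem_reverse] at hmem
            have hxq : x ∈ q.support := Walk.snd_mem_support_of_mem_edges q hmem
            have hxp : x ∈ (Walk.cons h p').support := by
              rw [Walk.support_cons]
              exact List.mem_cons_of_mem _ p'.start_mem_support
            have hxb : x = b := hcom x hxp hxq h.ne'
            subst hxb
            obtain ⟨had, q', rfl⟩ := path_edge_start q hq hmem
            have hq' : q'.IsPath := ((Walk.cons_isPath_iff _ _).mp hq).1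
            have hq'nil : q' = Walk.nil := Walk.isPath_iff_eq_nil.mp hq'
            have hp'nil : p' = Walk.nil := Walk.isPath_iff_eq_nil.mp hp'
            subst hq'nil
            subst hp'nil
            exact hne (by rw [Subsingleton.elim h had])
        refine ⟨a, Walk.cons h (p'.append q.reverse),
          (Walk.cons_isCycle_iff _ h).mpr ⟨happ, hedge⟩, ?_⟩
        simp [Walk.length_cons, Walk.length_append, Walk.length_reverse]

/-- A trail containing an edge `s(u,v)` can be split into two walks avoiding that edge. -/
lemma trail_split {u v : V} :
    ∀ {x y : V} (p : H.Walk x y), p.IsTrail → s(u, v) ∈ p.edges →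
      (∃ (q1 : H.Walk x u) (q2 : H.Walk v y),
        (∀ f ∈ q1.edges, f ∈ p.edges ∧ f ≠ s(u, v)) ∧
        (∀ f ∈ q2.edges, f ∈ p.edges ∧ f ≠ s(u, v))) ∨
      (∃ (q1 : H.Walk x v) (q2 : H.Walk u y),
        (∀ f ∈ q1.edges, f ∈ p.edges ∧ f ≠ s(u, v)) ∧
        (∀ f ∈ q2.edges, f ∈ p.edges ∧ f ≠ s(u, v))) := by
  intro x y p
  induction p with
  | nil => intro _ h; simp at h
  | cons hadj p ih =>
    rename_i a c d
    intro ht he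
    rw [Walk.edges_cons, List.mem_cons] at he
    have htp : p.IsTrail := ht.of_cons
    have hfst : s(a, c) ∉ p.edges := ((Walk.isTrail_cons _ _).mp ht).2
    rcases he with he | he
    · rw [Sym2.eq_iff] at he
      rcases he with ⟨rfl, rfl⟩ | ⟨rfl, rfl⟩
      · left
        refine ⟨Walk.nil, p, by simp, fun f hf => ⟨by simp [hf], ?_⟩⟩
        intro hfe; rw [hfe] at hf; exact hfst hf
      · right
        refine ⟨Walk.nil, p, by simp, fun f hf => ⟨by simp [hf], ?_⟩⟩
        intro hfe; rw [hfe] at hf; rw [Sym2.eq_swap] at hf; exact hfst hf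
    · rcases ih htp he with ⟨q1, q2, h1, h2⟩ | ⟨q1, q2, h1, h2⟩
      · left
        refine ⟨Walk.cons hadj q1, q2, ?_, fun f hf => ⟨by simp [(h2 f hf).1], (h2 f hf).2⟩⟩
        intro f hf
        rw [Walk.edges_cons, List.mem_cons] at hf
        rcases hf with rfl | hf
        · refine ⟨by simp, ?_⟩
          intro hfe; rw [← hfe] at he; exact hfst he
        · exact ⟨by simp [(h1 f hf).1], (h1 f hf).2⟩
      · right
        refine ⟨Walk.cons hadj q1, q2, ?_, fun f hf => ⟨by simp [(h2 f hf).1], (h2 f hf).2⟩⟩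
        intro f hf
        rw [Walk.edges_cons, List.mem_cons] at hf
        rcases hf with rfl | hf
        · refine ⟨by simp, ?_⟩
          intro hfe; rw [← hfe] at he; exact hfst he
        · exact ⟨by simp [(h1 f hf).1], (h1 f hf).2⟩

/-- Deleting the max edges of short cycles preserves reachability. -/
lemma reach_deleteEdges {V : Type} (G : SimpleGraph V) (w : Sym2 V → ℕ) (r : ℕ) (u v : V) :
    (G.deleteEdges (MaxShortCycleEdges G w r)).Reachable u v ↔ G.Reachable u v := by
  constructor
  · exact fun h => h.mono (G.deleteEdges_le _)
  · have key : ∀ n : ℕ, ∀ u v : V, G.Adj u v → w s(u, v) < n →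
        (G.deleteEdges (MaxShortCycleEdges G w r)).Reachable u v := by
      intro n
      induction n with
      | zero => intro u v _ h; omega
      | succ n ih =>
        intro u v huv hwn
        by_cases he : s(u, v) ∈ MaxShortCycleEdges G w r
        · obtain ⟨x, c, hc, hlen, hmem, hmax⟩ := he
          have haux : ∀ {a b : V} (W : G.Walk a b), (∀ f ∈ W.edges, w f < n) →
              (G.deleteEdges (MaxShortCycleEdges G w r)).Reachable a b := by
            intro a b W
            induction W with
            | nil => exact fun _ => Reachable.refl _
            | cons hadj W' ih2 =>
              intro hW
              exact (ih _ _ hadj (hW _ (by simp))).trans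
                (ih2 fun f hf => hW f (by simp [hf]))
          have hwlt : ∀ f ∈ c.edges, f ≠ s(u, v) → w f < n := by
            intro f hf hfne
            have := hmax f hf hfne
            omega
          rcases trail_split c hc.isTrail hmem with ⟨q1, q2, h1, h2⟩ | ⟨q1, q2, h1, h2⟩
          · -- q1 : x → u, q2 : v → x
            have r1 := haux q1 (fun f hf => hwlt f (h1 f hf).1 (h1 f hf).2)
            have r2 := haux q2 (fun f hf => hwlt f (h2 f hf).1 (h2 f hf).2)
            exact r1.symm.trans r2.symm
          · have r1 := haux q1 (fun f hf => hwlt f (h1 f hf).1 (h1 f hf).2)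
            have r2 := haux q2 (fun f hf => hwlt f (h2 f hf).1 (h2 f hf).2)
            exact r2.trans r1
        · exact (SimpleGraph.deleteEdges_adj.mpr ⟨huv, he⟩).reachable
    intro h
    obtain ⟨p⟩ := h
    induction p with
    | nil => exact Reachable.refl _
    | cons hadj p' ih =>
      exact (key (w s(_, _) + 1) _ _ hadj (Nat.lt_succ_self _)).trans ih

/-- The graph obtained by deleting max edges of short cycles has no short cycles. -/
lemma no_short_cycle {V : Type} (G : SimpleGraph V) (w : Sym2 V → ℕ)
    (hw : Function.Injective w) (r : ℕ) (x : V)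
    (c : (G.deleteEdges (MaxShortCycleEdges G w r)).Walk x x) (hc : c.IsCycle) :
    ¬ c.length ≤ 2 * r := by
  intro hlen
  have hsub : ∀ e ∈ c.edges, e ∈ G.edgeSet := by
    intro e he
    have := c.edges_subset_edgeSet he
    rw [SimpleGraph.edgeSet_deleteEdges] at this
    exact this.1
  have hnotdel : ∀ e ∈ c.edges, e ∉ MaxShortCycleEdges G w r := by
    intro e he
    have := c.edges_subset_edgeSet he
    rw [SimpleGraph.edgeSet_deleteEdges] at this
    exact this.2
  set c' : G.Walk x x := c.transfer G hsub with hc'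
  have hc'cyc : c'.IsCycle := hc.transfer hsub
  have hc'edges : c'.edges = c.edges := c.edges_transfer hsub
  have hc'len : c'.length = c.length := c.length_transfer hsub
  have hne : c.edges ≠ [] := by
    intro h
    have h3 := hc.three_le_length
    have := c.length_edges
    rw [h] at this
    simp at this
    omega
  obtain ⟨e, he⟩ : ∃ e, c.edges.argmax w = some e := by
    cases h : c.edges.argmax w with
    | none => exact absurd (List.argmax_eq_none.mp h) hne
    | some e => exact ⟨e, rfl⟩
  have hemem : e ∈ c.edges := List.argmax_mem he
  have hmax : ∀ e' ∈ c.edges, e' ≠ e → w e' < w e := by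
    intro e' he' hne'
    have hle := List.le_of_mem_argmax he' he
    exact lt_of_le_of_ne hle (fun h => hne' (hw h))
  exact hnotdel e hemem ⟨x, c', hc'cyc, by omega, by rw [hc'edges]; exact hemem,
    by rw [hc'edges]; exact hmax⟩

lemma girth_degenerate {V : Type} [Fintype V] {H : SimpleGraph V} {r k : ℕ} (hr : 1 ≤ r)
    (hgirth : ∀ (x : V) (c : H.Walk x x), c.IsCycle → ¬ c.length ≤ 2 * r)
    (hk : 0 < Fintype.card V → Fintype.card V < k ^ r)
    (s : Finset V) (hs : s.Nonempty) :
    ∃ v ∈ s, {u | u ∈ s ∧ H.Adj v u}.ncard ≤ k := by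
  classical
  by_contra hcon
  push_neg at hcon
  obtain ⟨v, hv⟩ := hs
  letI : H.LocallyFinite := fun _ => Fintype.ofFinite _
  have hdeg : ∀ u ∈ s, k + 1 ≤ (s.filter (fun z => H.Adj u z)).card := by
    intro u hu
    have h1 := hcon u hu
    have hset : {z | z ∈ s ∧ H.Adj u z} = ↑(s.filter (fun z => H.Adj u z)) := by
      ext z; simp [Finset.mem_filter]
    rw [hset, Set.ncard_coe_finset] at h1
    omega
  set P : ℕ → Finset (Σ u : V, H.Walk u v) := fun i =>
    Finset.univ.sigma (fun u => (H.finsetWalkLength i u v).filter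
      (fun p => p.IsPath ∧ ∀ z ∈ p.support, z ∈ s)) with hP
  have hmemP : ∀ (i : ℕ) (a : Σ u : V, H.Walk u v),
      a ∈ P i ↔ (a.2.length = i ∧ a.2.IsPath ∧ ∀ z ∈ a.2.support, z ∈ s) := by
    rintro i ⟨u, p⟩
    simp only [hP, Finset.mem_sigma, Finset.mem_filter, Finset.mem_univ, true_and,
      SimpleGraph.mem_finsetWalkLength_iff]
  -- growth claim
  have hgrow : ∀ i : ℕ, i + 1 ≤ r → k * (P i).card ≤ (P (i + 1)).card := by
    intro i hir
    set ext : (Σ u : V, H.Walk u v) → Finset V := fun a =>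
      (s.filter (fun z => H.Adj a.1 z)) \
        ((s.filter (fun z => H.Adj a.1 z)).filter (fun z => z ∈ a.2.support)) with hext
    have hextmem : ∀ (a : Σ u : V, H.Walk u v) (z : V),
        z ∈ ext a ↔ (z ∈ s ∧ H.Adj a.1 z ∧ z ∉ a.2.support) := by
      intro a z
      simp only [hext, Finset.mem_sdiff, Finset.mem_filter]
      tauto
    have hextcard : ∀ a ∈ P i, k ≤ (ext a).card := by
      rintro ⟨u, p⟩ ha
      obtain ⟨hlen, hpath, hsupp⟩ := (hmemP i _).mp ha
      have hlen' : p.length = i := hlen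
      have hpath' : p.IsPath := hpath
      have hu : u ∈ s := hsupp u p.start_mem_support
      have hedge : ∀ z, H.Adj u z → z ∈ p.support → s(u, z) ∈ p.edges := by
        intro z hadj hzsup
        by_contra hnot
        have hcyc : (Walk.cons hadj.symm (p.takeUntil z hzsup)).IsCycle := by
          refine (Walk.cons_isCycle_iff _ hadj.symm).mpr ⟨hpath'.takeUntil _, ?_⟩
          intro hmem
          rw [Sym2.eq_swap] at hmem
          exact hnot (p.edges_takeUntil_subset hzsup hmem)
        refine hgirth z _ hcyc ?_
        have h1 := p.length_takeUntil_le hzsup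
        simp only [Walk.length_cons]
        omega
      have hbad : ((s.filter (fun z => H.Adj u z)).filter
          (fun z => z ∈ p.support)).card ≤ 1 := by
        refine Finset.card_le_one.mpr ?_
        intro z1 hz1 z2 hz2
        simp only [Finset.mem_filter] at hz1 hz2
        obtain ⟨had1, p1, he1⟩ := path_edge_start p hpath' (hedge z1 hz1.1.2 hz1.2)
        obtain ⟨had2, p2, he2⟩ := path_edge_start p hpath' (hedge z2 hz2.1.2 hz2.2)
        rw [he1] at he2
        have := congrArg Walk.support he2
        rw [Walk.support_cons, Walk.support_cons, Walk.support_eq_cons p1,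
          Walk.support_eq_cons p2] at this
        exact (List.cons.injEq _ _ _ _ ▸ ((List.cons.injEq _ _ _ _).mp this).2).1
      have hsub : ((s.filter (fun z => H.Adj u z)).filter
            (fun z => z ∈ p.support)) ⊆
          s.filter (fun z => H.Adj u z) := Finset.filter_subset _ _
      have hcard := Finset.card_sdiff_of_subset hsub
      have hdegu := hdeg u hu
      show k ≤ ((s.filter (fun z => H.Adj u z)) \ ((s.filter (fun z => H.Adj u z)).filter (fun z => z ∈ p.support))).card
      omega
    set Φ : (Σ _a : (Σ u : V, H.Walk u v), V) → (Σ u : V, H.Walk u v) := fun x =>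
      if h : H.Adj x.2 x.1.1 then ⟨x.2, Walk.cons h x.1.2⟩ else x.1 with hΦ
    have hmaps : ∀ x ∈ (P i).sigma ext, Φ x ∈ P (i + 1) := by
      rintro ⟨⟨u, p⟩, z⟩ hx
      rw [Finset.mem_sigma] at hx
      obtain ⟨ha, hz⟩ := hx
      obtain ⟨hzs, hadj, hznot⟩ := (hextmem _ _).mp hz
      obtain ⟨hlen, hpath, hsupp⟩ := (hmemP i _).mp ha
      have hlen' : p.length = i := hlen
      have hpath' : p.IsPath := hpath
      have hadj' : H.Adj z u := hadj.symm
      have : Φ ⟨⟨u, p⟩, z⟩ = ⟨z, Walk.cons hadj' p⟩ := dif_pos hadj'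
      rw [this, hmemP]
      refine ⟨by simp [Walk.length_cons, hlen'], (Walk.cons_isPath_iff _ _).mpr ⟨hpath', hznot⟩, ?_⟩
      intro y hy
      rw [Walk.support_cons, List.mem_cons] at hy
      rcases hy with rfl | hy
      · exact hzs
      · exact hsupp y hy
    have hinj : Set.InjOn Φ ((P i).sigma ext) := by
      rintro ⟨⟨u1, p1⟩, z1⟩ hx ⟨⟨u2, p2⟩, z2⟩ hy hxy
      rw [Finset.mem_coe, Finset.mem_sigma] at hx hy
      obtain ⟨-, hz1⟩ := hx
      obtain ⟨-, hz2⟩ := hy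
      have had1 : H.Adj z1 u1 := ((hextmem _ _).mp hz1).2.1.symm
      have had2 : H.Adj z2 u2 := ((hextmem _ _).mp hz2).2.1.symm
      rw [show Φ ⟨⟨u1, p1⟩, z1⟩ = ⟨z1, Walk.cons had1 p1⟩ from dif_pos had1,
        show Φ ⟨⟨u2, p2⟩, z2⟩ = ⟨z2, Walk.cons had2 p2⟩ from dif_pos had2] at hxy
      obtain ⟨rfl, hheq⟩ := Sigma.mk.inj_iff.mp hxy
      have hcons : Walk.cons had1 p1 = Walk.cons had2 p2 := eq_of_heq hheq
      injection hcons with h1 h2 h3 h4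
      subst h2
      rw [eq_of_heq h4]
    calc k * (P i).card = (P i).card • k := by rw [smul_eq_mul, mul_comm]
      _ ≤ ∑ a ∈ P i, (ext a).card := Finset.card_nsmul_le_sum _ _ _ hextcard
      _ = ((P i).sigma ext).card := (Finset.card_sigma _ _).symm
      _ ≤ (P (i + 1)).card := Finset.card_le_card_of_injOn Φ hmaps hinj
  have hP0 : 1 ≤ (P 0).card := by
    refine Finset.card_pos.mpr ⟨⟨v, Walk.nil⟩, ?_⟩
    rw [hmemP]
    refine ⟨rfl, Walk.IsPath.nil, ?_⟩
    intro z hz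
    rw [Walk.support_nil, List.mem_singleton] at hz
    exact hz ▸ hv
  have hPr : ∀ i : ℕ, i ≤ r → k ^ i ≤ (P i).card := by
    intro i
    induction i with
    | zero => intro _; simpa using hP0
    | succ i ih =>
      intro hir
      calc k ^ (i + 1) = k * k ^ i := by ring
        _ ≤ k * (P i).card := Nat.mul_le_mul_left _ (ih (by omega))
        _ ≤ (P (i + 1)).card := hgrow i hir
  have hle : (P r).card ≤ Fintype.card V := by
    have := Finset.card_le_card_of_injOn (fun a => a.1)
      (fun a _ => Finset.mem_univ (α := V) a.1) (s := P r) ?_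
    · simpa using this
    · rintro ⟨u1, p1⟩ h1 ⟨u2, p2⟩ h2 hab
      rw [Finset.mem_coe, hmemP] at h1 h2
      obtain ⟨hl1, hpa1, -⟩ := h1
      obtain ⟨hl2, hpa2, -⟩ := h2
      have hl1' : p1.length = r := hl1
      have hl2' : p2.length = r := hl2
      have hpa1' : p1.IsPath := hpa1
      have hpa2' : p2.IsPath := hpa2
      simp only at hab
      subst hab
      by_cases hpq : p1 = p2
      · rw [hpq]
      · obtain ⟨x, c, hc, hclen⟩ := cycle_of_two_paths (2 * r) p1 p2 hpa1' hpa2' hpq (by omega)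
        exact absurd (show c.length ≤ 2 * r by omega) (hgirth x c hc)
  have hnpos : 0 < Fintype.card V := Fintype.card_pos_iff.mpr ⟨v⟩
  have := hPr r le_rfl
  have := hk hnpos
  omega


end Helpers

lemma arith_bound (n r : ℕ) (hr : 1 ≤ r) (hn : 0 < n) :
    n < (2 * ⌈(n : ℝ) ^ ((1 : ℝ) / r)⌉₊) ^ r := by
  set b := ⌈(n : ℝ) ^ ((1 : ℝ) / r)⌉₊ with hbdef
  have hr0 : (r : ℝ) ≠ 0 := by positivity
  have h0 : (0 : ℝ) ≤ (n : ℝ) ^ ((1 : ℝ) / r) := Real.rpow_nonneg (by positivity) _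
  have h1 : ((n : ℝ) ^ ((1 : ℝ) / r)) ≤ (b : ℝ) := Nat.le_ceil _
  have h2 : ((n : ℝ) ^ ((1 : ℝ) / r)) ^ (r : ℕ) ≤ (b : ℝ) ^ (r : ℕ) :=
    pow_le_pow_left₀ h0 h1 r
  have h3 : (n : ℝ) = ((n : ℝ) ^ ((1 : ℝ) / r)) ^ (r : ℕ) := by
    rw [← Real.rpow_natCast ((n : ℝ) ^ ((1 : ℝ) / r)) r, ← Real.rpow_mul (Nat.cast_nonneg n),
      one_div_mul_cancel hr0, Real.rpow_one]
  have h4 : (n : ℝ) ≤ (b : ℝ) ^ (r : ℕ) := h3 ▸ h2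
  have h5 : n ≤ b ^ r := by exact_mod_cast (by push_cast; exact h4 : (n : ℝ) ≤ ((b ^ r : ℕ) : ℝ))
  have h6 : 2 ≤ 2 ^ r := by
    calc 2 = 2 ^ 1 := (pow_one 2).symm
      _ ≤ 2 ^ r := Nat.pow_le_pow_right (by norm_num) hr
  calc n < 2 * n := by omega
    _ ≤ 2 * b ^ r := by omega
    _ ≤ 2 ^ r * b ^ r := Nat.mul_le_mul_right _ h6
    _ = (2 * b) ^ r := (mul_pow 2 b r).symm

theorem remove_short_cycle_max_edges :
    ∃ C : ℕ, 0 < C ∧ ∀ (V : Type) [Fintype V] (G : SimpleGraph V)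
      (w : Sym2 V → ℕ), Function.Injective w → ∀ r : ℕ, 1 ≤ r →
      Degenerate (G.deleteEdges (MaxShortCycleEdges G w r))
          (C * ⌈(Fintype.card V : ℝ) ^ ((1 : ℝ) / r)⌉₊) ∧
      (∀ u v : V, (G.deleteEdges (MaxShortCycleEdges G w r)).Reachable u v ↔
          G.Reachable u v) ∧
      ∀ F : SimpleGraph V,
        IsSpanningForest (G.deleteEdges (MaxShortCycleEdges G w r)) F →
        IsSpanningForest G F := by
  refine ⟨2, by norm_num, ?_⟩
  intro V _ G w hw r hr
  have hreach : ∀ u v : V, (G.deleteEdges (MaxShortCycleEdges G w r)).Reachable u v ↔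
      G.Reachable u v := fun u v => reach_deleteEdges G w r u v
  have hgirth : ∀ (x : V) (c : (G.deleteEdges (MaxShortCycleEdges G w r)).Walk x x),
      c.IsCycle → ¬ c.length ≤ 2 * r := fun x c hc => no_short_cycle G w hw r x c hc
  refine ⟨?_, hreach, ?_⟩
  · intro s hs
    refine girth_degenerate hr hgirth ?_ s hs
    intro hn
    exact arith_bound (Fintype.card V) r hr hn
  · intro F hF
    exact ⟨hF.1.trans (G.deleteEdges_le _), hF.2.1,
      fun u v => (hF.2.2 u v).trans (hreach u v)⟩
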